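/- Let C ⊆ 2^{[n]} be a code, σ_1, ..., σ_m ⊆ [n], and define f: C → 2^{[m]} by f(c) = { i ∈ [m] : σ_i ⊆ c }. Then f is a morphism of codes from C to f(C): the preimage of every trunk of f(C) is a trunk of C. -/
import Mathlib


/-- The trunk of `σ` in a code `C`. -/
def Tk {V : Type*} (C : Set (Finset V)) (σ : Finset V) : Set (Finset V) :=
  {τ ∈ C | σ ⊆ τ}

/-- The map on codewords defined by the trunks of `σ_1, …, σ_m`. -/
def trunkMap {n m : ℕ} (σ : Fin m → Finset (Fin n)) (c : Finset (Fin n)) :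
    Finset (Fin m) :=
  Finset.univ.filter (fun i => σ i ⊆ c)

/-- The map `f(c) = {i : σ_i ⊆ c}` is a morphism of codes from `C` to `f(C)`:
the preimage of every trunk of `f(C)` is a trunk of `C` (possibly empty). -/
theorem stmt4 {n m : ℕ} (C : Set (Finset (Fin n))) (σ : Fin m → Finset (Fin n)) :
    ∀ τ : Finset (Fin m),
      (∃ ρ : Finset (Fin n),
        {c ∈ C | trunkMap σ c ∈ Tk (trunkMap σ '' C) τ} = Tk C ρ) ∨
      {c ∈ C | trunkMap σ c ∈ Tk (trunkMap σ '' C) τ} = ∅ := by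
  intro τ
  left
  refine ⟨τ.sup σ, ?_⟩
  ext c
  simp only [Tk, trunkMap, Set.mem_setOf_eq, Set.mem_image]
  constructor
  · rintro ⟨hc, -, hτ⟩
    refine ⟨hc, Finset.sup_le fun i hi => ?_⟩
    simpa using hτ hi
  · rintro ⟨hc, h⟩
    refine ⟨hc, ⟨c, hc, rfl⟩, fun i hi => ?_⟩
    simp only [Finset.mem_filter, Finset.mem_univ, true_and]
    exact (Finset.le_sup hi).trans h
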